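/- Let k be a commutative ring, n ≥ 1, and let ∂_1,…,∂_{n−1} be the Demazure operators on P_n = k[X_1,…,X_n]. Then ∂_i² = 0 for all i, ∂_i∂_j = ∂_j∂_i whenever |i−j| > 1, and ∂_i∂_{i+1}∂_i = ∂_{i+1}∂_i∂_{i+1} for 1 ≤ i ≤ n−2. -/

import Mathlib

open MvPolynomial

/-! ### Auxiliary lemmas -/

private lemma isRegular_of_ringEquiv {R S : Type*} [CommRing R] [CommRing S]
    (e : R ≃+* S) {x : R} (h : IsRegular (e x)) : IsRegular x := by
  constructor
  · intro a b hab
    apply e.injective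
    apply h.left
    simpa only [← map_mul] using congrArg e hab
  · intro a b hab
    apply e.injective
    apply h.right
    simpa only [← map_mul] using congrArg e hab

/-- `X u - X v` is a nonzerodivisor in `k[X_1, …, X_{n+1}]` when `u ≠ v`. -/
private lemma regX {k : Type*} [CommRing k] {n : ℕ} {u v : Fin (n + 1)} (h : u ≠ v) :
    IsRegular (X u - X v : MvPolynomial (Fin (n + 1)) k) := by
  have key : ∀ w : Fin n, IsRegular (X 0 - X w.succ : MvPolynomial (Fin (n + 1)) k) := by
    intro w
    apply isRegular_of_ringEquiv (MvPolynomial.finSuccEquiv k n).toRingEquiv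
    have h1 : (MvPolynomial.finSuccEquiv k n) (X 0 - X w.succ)
        = Polynomial.X - Polynomial.C (X w) := by
      rw [map_sub, finSuccEquiv_X_zero, finSuccEquiv_X_succ]
    rw [show ((MvPolynomial.finSuccEquiv k n).toRingEquiv) ((X 0 - X w.succ :
        MvPolynomial (Fin (n + 1)) k)) = Polynomial.X - Polynomial.C (X w) from h1]
    exact (Polynomial.monic_X_sub_C (X w)).isRegular
  rcases eq_or_ne u 0 with rfl | hu
  · obtain ⟨w, rfl⟩ := Fin.eq_succ_of_ne_zero (Ne.symm h)
    exact key w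
  · apply isRegular_of_ringEquiv (renameEquiv k (Equiv.swap u 0)).toRingEquiv
    have h2 : (renameEquiv k (Equiv.swap u 0)) (X u - X v : MvPolynomial (Fin (n + 1)) k)
        = X 0 - X (Equiv.swap u 0 v) := by
      simp only [renameEquiv_apply, map_sub, rename_X, Equiv.swap_apply_left]
    have h3 : Equiv.swap u 0 v ≠ 0 := by
      intro hc
      exact h ((Equiv.swap u 0).injective (hc.trans (Equiv.swap_apply_left u 0).symm)).symm
    obtain ⟨w, hw⟩ := Fin.eq_succ_of_ne_zero h3
    rw [show ((renameEquiv k (Equiv.swap u 0)).toRingEquiv)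
        ((X u - X v : MvPolynomial (Fin (n + 1)) k)) = X 0 - X (Equiv.swap u 0 v) from h2, hw]
    exact key w

/-- A Demazure operator's values are invariant under the corresponding transposition. -/
private lemma demazure_inv {k : Type*} [CommRing k] {n : ℕ} (u v : Fin (n + 1)) (huv : u ≠ v)
    (Di : MvPolynomial (Fin (n + 1)) k → MvPolynomial (Fin (n + 1)) k)
    (hDi : ∀ P, (X v - X u) * Di P = P - rename (Equiv.swap u v) P) (P) :
    rename (Equiv.swap u v) (Di P) = Di P := by
  refine (regX huv.symm).left ?_
  show (X v - X u) * rename (Equiv.swap u v) (Di P) = (X v - X u) * Di P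
  have h1 := congrArg (rename (Equiv.swap u v)) (hDi P)
  rw [map_mul, map_sub, map_sub, rename_X, rename_X, Equiv.swap_apply_left,
    Equiv.swap_apply_right, rename_rename] at h1
  rw [show ((Equiv.swap u v : Fin (n + 1) → Fin (n + 1)) ∘ (Equiv.swap u v))
      = id from funext fun x => Equiv.swap_apply_self u v x, rename_id, AlgHom.id_apply] at h1
  rw [hDi P]
  linear_combination -h1

/-- Nilpotence of a Demazure operator. -/
private lemma demazure_nil {k : Type*} [CommRing k] {n : ℕ} (u v : Fin (n + 1)) (huv : u ≠ v)
    (Di : MvPolynomial (Fin (n + 1)) k → MvPolynomial (Fin (n + 1)) k)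
    (hDi : ∀ P, (X v - X u) * Di P = P - rename (Equiv.swap u v) P) (P) :
    Di (Di P) = 0 := by
  refine (regX huv.symm).left ?_
  show (X v - X u) * Di (Di P) = (X v - X u) * 0
  rw [hDi (Di P), demazure_inv u v huv Di hDi P, sub_self, mul_zero]

private lemma comm_half {A : Type*} [CommRing A] (Di Dj : A → A) (d e : A) (ra rb : A → A)
    (hamul : ∀ x y, ra (x * y) = ra x * ra y) (hra_e : ra e = e)
    (hDi : ∀ P, d * Di P = P - ra P) (hDj : ∀ P, e * Dj P = P - rb P) (P : A) :
    e * (d * Di (Dj P)) = (P - rb P) - ra (P - rb P) := by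
  rw [hDi (Dj P), mul_sub e, hDj P,
    show e * ra (Dj P) = ra (e * Dj P) from by rw [hamul e (Dj P), hra_e], hDj P]

private lemma comm_core {A : Type*} [CommRing A] (Di Dj : A → A) (d e : A)
    (hd : IsRegular d) (he : IsRegular e) (ra rb : A → A)
    (hamul : ∀ x y, ra (x * y) = ra x * ra y) (hasub : ∀ x y, ra (x - y) = ra x - ra y)
    (hbmul : ∀ x y, rb (x * y) = rb x * rb y) (hbsub : ∀ x y, rb (x - y) = rb x - rb y)
    (hra_e : ra e = e) (hrb_d : rb d = d) (hcomm : ∀ P, ra (rb P) = rb (ra P))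
    (hDi : ∀ P, d * Di P = P - ra P) (hDj : ∀ P, e * Dj P = P - rb P) (P : A) :
    Di (Dj P) = Dj (Di P) := by
  refine hd.left (he.left ?_)
  show e * (d * Di (Dj P)) = e * (d * Dj (Di P))
  rw [comm_half Di Dj d e ra rb hamul hra_e hDi hDj P, mul_left_comm e d,
    comm_half Dj Di e d rb ra hbmul hrb_d hDj hDi P]
  simp only [hasub, hbsub]
  rw [hcomm P]
  ring

private lemma braid_core {A : Type*} [CommRing A] (Di Dj : A → A) (d e f : A)
    (hd : IsRegular d) (he : IsRegular e) (hf : IsRegular f) (hdef : f = d + e)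
    (ra rb : A → A)
    (hamul : ∀ x y, ra (x * y) = ra x * ra y) (hasub : ∀ x y, ra (x - y) = ra x - ra y)
    (hbmul : ∀ x y, rb (x * y) = rb x * rb y) (hbsub : ∀ x y, rb (x - y) = rb x - rb y)
    (hra_e : ra e = f) (hra_f : ra f = e) (hrb_d : rb d = f) (hrb_f : rb f = d)
    (hinva : ∀ P, ra (Di P) = Di P) (hinvb : ∀ P, rb (Dj P) = Dj P)
    (hbraid : ∀ Q, ra (rb (ra Q)) = rb (ra (rb Q)))
    (hDi : ∀ P, d * Di P = P - ra P) (hDj : ∀ P, e * Dj P = P - rb P) (P : A) :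
    Di (Dj (Di P)) = Dj (Di (Dj P)) := by
  have m1 : ∀ Q, f * ra Q = ra (e * Q) := fun Q => by rw [hamul e Q, hra_e]
  have m2 : ∀ Q, f * rb Q = rb (d * Q) := fun Q => by rw [hbmul d Q, hrb_d]
  have m3 : ∀ Q, e * ra (rb Q) = ra (rb (d * Q)) := fun Q => by
    rw [hbmul d Q, hrb_d, hamul f (rb Q), hra_f]
  have m4 : ∀ Q, d * rb (ra Q) = rb (ra (e * Q)) := fun Q => by
    rw [hamul e Q, hra_e, hbmul f (ra Q), hrb_f]
  have hL : f * (e * (d * Di (Dj (Di P))))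
      = (P - ra P) - rb (P - ra P) + ra (rb (P - ra P)) := by
    rw [hDi (Dj (Di P))]
    calc f * (e * (Dj (Di P) - ra (Dj (Di P))))
        = f * (e * Dj (Di P)) - e * (f * ra (Dj (Di P))) := by ring
      _ = f * (Di P - rb (Di P)) - e * ra (e * Dj (Di P)) := by
          conv_lhs => rw [hDj (Di P), m1]
      _ = f * Di P - rb (d * Di P) - e * ra (Di P - rb (Di P)) := by
          conv_lhs => rw [hDj (Di P), mul_sub f, m2]
      _ = f * Di P - rb (P - ra P) - e * (ra (Di P) - ra (rb (Di P))) := by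
          rw [hDi P, hasub (Di P) (rb (Di P))]
      _ = f * Di P - e * Di P - rb (P - ra P) + ra (rb (d * Di P)) := by
          rw [hinva P, mul_sub e, m3 (Di P)]; ring
      _ = (P - ra P) - rb (P - ra P) + ra (rb (P - ra P)) := by
          rw [show ra (rb (d * Di P)) = ra (rb (P - ra P)) from by rw [hDi P]]
          linear_combination hDi P + Di P * hdef
  have hR : f * (d * (e * Dj (Di (Dj P))))
      = (P - rb P) - ra (P - rb P) + rb (ra (P - rb P)) := by
    rw [hDj (Di (Dj P))]
    calc f * (d * (Di (Dj P) - rb (Di (Dj P))))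
        = f * (d * Di (Dj P)) - d * (f * rb (Di (Dj P))) := by ring
      _ = f * (Dj P - ra (Dj P)) - d * rb (d * Di (Dj P)) := by
          conv_lhs => rw [hDi (Dj P), m2]
      _ = f * Dj P - ra (e * Dj P) - d * rb (Dj P - ra (Dj P)) := by
          conv_lhs => rw [hDi (Dj P), mul_sub f, m1]
      _ = f * Dj P - ra (P - rb P) - d * (rb (Dj P) - rb (ra (Dj P))) := by
          rw [hDj P, hbsub (Dj P) (ra (Dj P))]
      _ = f * Dj P - d * Dj P - ra (P - rb P) + rb (ra (e * Dj P)) := by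
          rw [hinvb P, mul_sub d, m4 (Dj P)]; ring
      _ = (P - rb P) - ra (P - rb P) + rb (ra (P - rb P)) := by
          rw [show rb (ra (e * Dj P)) = rb (ra (P - rb P)) from by rw [hDj P]]
          linear_combination hDj P + Dj P * hdef
  refine hd.left (he.left (hf.left ?_))
  show f * (e * (d * Di (Dj (Di P)))) = f * (e * (d * Dj (Di (Dj P))))
  rw [hL, mul_left_comm e d, hR]
  simp only [hasub, hbsub]
  rw [hbraid P]
  ring

/-- The Demazure operators `∂_i` on `k[X_1, …, X_{n+1}]` — the unique `k`-linear maps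
satisfying `(X_{i+1} − X_i) ∂_i(P) = P − s_i(P)` — satisfy `∂_i² = 0`,
`∂_i ∂_j = ∂_j ∂_i` for `|i − j| > 1`, and the braid relations
`∂_i ∂_{i+1} ∂_i = ∂_{i+1} ∂_i ∂_{i+1}`. -/
theorem demazure_braid_relations (k : Type*) [CommRing k] (n : ℕ)
    (D : Fin n → MvPolynomial (Fin (n + 1)) k →ₗ[k] MvPolynomial (Fin (n + 1)) k)
    (hD : ∀ (i : Fin n) (P : MvPolynomial (Fin (n + 1)) k),
      (X i.succ - X i.castSucc) * D i P =
        P - rename (Equiv.swap i.castSucc i.succ) P) :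
    (∀ i : Fin n, (D i) ∘ₗ (D i) = 0) ∧
    (∀ i j : Fin n, (i : ℕ) + 1 < (j : ℕ) ∨ (j : ℕ) + 1 < (i : ℕ) →
      (D i) ∘ₗ (D j) = (D j) ∘ₗ (D i)) ∧
    (∀ i j : Fin n, (j : ℕ) = (i : ℕ) + 1 →
      (D i) ∘ₗ (D j) ∘ₗ (D i) = (D j) ∘ₗ (D i) ∘ₗ (D j)) := by
  refine ⟨?_, ?_, ?_⟩
  · -- nilpotence
    intro i
    apply LinearMap.ext; intro P
    simp only [LinearMap.comp_apply, LinearMap.zero_apply]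
    have huv : (i.castSucc : Fin (n + 1)) ≠ i.succ := by
      simp only [ne_eq, Fin.ext_iff, Fin.coe_castSucc, Fin.val_succ]; omega
    exact demazure_nil i.castSucc i.succ huv _ (hD i) P
  · -- commutation
    intro i j hij
    apply LinearMap.ext; intro P
    simp only [LinearMap.comp_apply]
    have huv : (i.castSucc : Fin (n + 1)) ≠ i.succ := by
      simp only [ne_eq, Fin.ext_iff, Fin.coe_castSucc, Fin.val_succ]; omega
    have hst : (j.castSucc : Fin (n + 1)) ≠ j.succ := by
      simp only [ne_eq, Fin.ext_iff, Fin.coe_castSucc, Fin.val_succ]; omega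
    have h1 : (j.castSucc : Fin (n + 1)) ≠ i.castSucc := by
      simp only [ne_eq, Fin.ext_iff, Fin.coe_castSucc, Fin.val_succ]; omega
    have h2 : (j.castSucc : Fin (n + 1)) ≠ i.succ := by
      simp only [ne_eq, Fin.ext_iff, Fin.coe_castSucc, Fin.val_succ]; omega
    have h3 : (j.succ : Fin (n + 1)) ≠ i.castSucc := by
      simp only [ne_eq, Fin.ext_iff, Fin.coe_castSucc, Fin.val_succ]; omega
    have h4 : (j.succ : Fin (n + 1)) ≠ i.succ := by
      simp only [ne_eq, Fin.ext_iff, Fin.coe_castSucc, Fin.val_succ]; omega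
    have hra_e : rename (Equiv.swap i.castSucc i.succ)
        (X j.succ - X j.castSucc : MvPolynomial (Fin (n + 1)) k)
        = X j.succ - X j.castSucc := by
      rw [map_sub, rename_X, rename_X, Equiv.swap_apply_of_ne_of_ne h3 h4,
        Equiv.swap_apply_of_ne_of_ne h1 h2]
    have hrb_d : rename (Equiv.swap j.castSucc j.succ)
        (X i.succ - X i.castSucc : MvPolynomial (Fin (n + 1)) k)
        = X i.succ - X i.castSucc := by
      rw [map_sub, rename_X, rename_X, Equiv.swap_apply_of_ne_of_ne h2.symm h4.symm,
        Equiv.swap_apply_of_ne_of_ne h1.symm h3.symm]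
    have hdis : (Equiv.swap (i.castSucc : Fin (n + 1)) i.succ).Disjoint
        (Equiv.swap j.castSucc j.succ) := by
      intro x
      rcases eq_or_ne x i.castSucc with rfl | hxu
      · right; exact Equiv.swap_apply_of_ne_of_ne h1.symm h3.symm
      rcases eq_or_ne x i.succ with rfl | hxv
      · right; exact Equiv.swap_apply_of_ne_of_ne h2.symm h4.symm
      · left; exact Equiv.swap_apply_of_ne_of_ne hxu hxv
    have hfun : ((Equiv.swap (i.castSucc : Fin (n + 1)) i.succ : Equiv.Perm (Fin (n + 1)))
          : Fin (n + 1) → Fin (n + 1)) ∘ (Equiv.swap j.castSucc j.succ)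
        = ((Equiv.swap (j.castSucc : Fin (n + 1)) j.succ : Equiv.Perm (Fin (n + 1)))
          : Fin (n + 1) → Fin (n + 1)) ∘ (Equiv.swap i.castSucc i.succ) := by
      rw [← Equiv.Perm.coe_mul, ← Equiv.Perm.coe_mul, hdis.commute.eq]
    have hcomm : ∀ P : MvPolynomial (Fin (n + 1)) k,
        rename (Equiv.swap i.castSucc i.succ) (rename (Equiv.swap j.castSucc j.succ) P)
        = rename (Equiv.swap j.castSucc j.succ) (rename (Equiv.swap i.castSucc i.succ) P) :=
      fun P => by rw [rename_rename, rename_rename, hfun]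
    exact comm_core (⇑(D i)) (⇑(D j)) (X i.succ - X i.castSucc) (X j.succ - X j.castSucc)
      (regX huv.symm) (regX hst.symm)
      (⇑(rename (Equiv.swap i.castSucc i.succ))) (⇑(rename (Equiv.swap j.castSucc j.succ)))
      (fun x y => map_mul _ x y) (fun x y => map_sub _ x y)
      (fun x y => map_mul _ x y) (fun x y => map_sub _ x y)
      hra_e hrb_d hcomm (hD i) (hD j) P
  · -- braid relations
    intro i j hij
    apply LinearMap.ext; intro P
    simp only [LinearMap.comp_apply]
    have hjc : (j.castSucc : Fin (n + 1)) = i.succ := by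
      apply Fin.ext; simp only [Fin.coe_castSucc, Fin.val_succ, hij]
    have hDj : ∀ P : MvPolynomial (Fin (n + 1)) k,
        (X j.succ - X i.succ) * D j P = P - rename (Equiv.swap i.succ j.succ) P := by
      intro P
      have h := hD j P
      rwa [hjc] at h
    have hne_uv : (i.castSucc : Fin (n + 1)) ≠ i.succ := by
      simp only [ne_eq, Fin.ext_iff, Fin.coe_castSucc, Fin.val_succ]; omega
    have hne_vw : (i.succ : Fin (n + 1)) ≠ j.succ := by
      simp only [ne_eq, Fin.ext_iff, Fin.coe_castSucc, Fin.val_succ]; omega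
    have hne_uw : (i.castSucc : Fin (n + 1)) ≠ j.succ := by
      simp only [ne_eq, Fin.ext_iff, Fin.coe_castSucc, Fin.val_succ]; omega
    have hra_e : rename (Equiv.swap i.castSucc i.succ)
        (X j.succ - X i.succ : MvPolynomial (Fin (n + 1)) k)
        = X j.succ - X i.castSucc := by
      rw [map_sub, rename_X, rename_X, Equiv.swap_apply_right,
        Equiv.swap_apply_of_ne_of_ne hne_uw.symm hne_vw.symm]
    have hra_f : rename (Equiv.swap i.castSucc i.succ)
        (X j.succ - X i.castSucc : MvPolynomial (Fin (n + 1)) k)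
        = X j.succ - X i.succ := by
      rw [map_sub, rename_X, rename_X, Equiv.swap_apply_left,
        Equiv.swap_apply_of_ne_of_ne hne_uw.symm hne_vw.symm]
    have hrb_d : rename (Equiv.swap i.succ j.succ)
        (X i.succ - X i.castSucc : MvPolynomial (Fin (n + 1)) k)
        = X j.succ - X i.castSucc := by
      rw [map_sub, rename_X, rename_X, Equiv.swap_apply_left,
        Equiv.swap_apply_of_ne_of_ne hne_uv hne_uw]
    have hrb_f : rename (Equiv.swap i.succ j.succ)
        (X j.succ - X i.castSucc : MvPolynomial (Fin (n + 1)) k)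
        = X i.succ - X i.castSucc := by
      rw [map_sub, rename_X, rename_X, Equiv.swap_apply_right,
        Equiv.swap_apply_of_ne_of_ne hne_uv hne_uw]
    have hperm : Equiv.swap (i.castSucc : Fin (n + 1)) i.succ * Equiv.swap i.succ j.succ
          * Equiv.swap i.castSucc i.succ
        = Equiv.swap i.succ j.succ * Equiv.swap i.castSucc i.succ
          * Equiv.swap i.succ j.succ := by
      have h1 := Equiv.swap_mul_swap_mul_swap hne_uv hne_uw
      have h2 := Equiv.swap_mul_swap_mul_swap (Ne.symm hne_vw) (Ne.symm hne_uw)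
      calc Equiv.swap (i.castSucc : Fin (n + 1)) i.succ * Equiv.swap i.succ j.succ
            * Equiv.swap i.castSucc i.succ
          = Equiv.swap i.succ i.castSucc * Equiv.swap j.succ i.succ
            * Equiv.swap i.succ i.castSucc := by
            rw [Equiv.swap_comm i.castSucc i.succ, Equiv.swap_comm i.succ j.succ]
        _ = Equiv.swap i.castSucc j.succ := h2
        _ = Equiv.swap j.succ i.castSucc := Equiv.swap_comm _ _
        _ = Equiv.swap i.succ j.succ * Equiv.swap i.castSucc i.succ
            * Equiv.swap i.succ j.succ := h1.symm
    have hfun : (((Equiv.swap (i.castSucc : Fin (n + 1)) i.succ : Equiv.Perm (Fin (n + 1)))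
          : Fin (n + 1) → Fin (n + 1)) ∘ (Equiv.swap i.succ j.succ))
          ∘ (Equiv.swap i.castSucc i.succ)
        = (((Equiv.swap ((i.succ : Fin (n + 1))) j.succ : Equiv.Perm (Fin (n + 1)))
          : Fin (n + 1) → Fin (n + 1)) ∘ (Equiv.swap i.castSucc i.succ))
          ∘ (Equiv.swap i.succ j.succ) := by
      have := congrArg (fun σ : Equiv.Perm (Fin (n + 1)) => (σ : Fin (n + 1) → Fin (n + 1)))
        hperm
      simpa only [Equiv.Perm.coe_mul] using this
    have hbraid : ∀ Q : MvPolynomial (Fin (n + 1)) k,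
        rename (Equiv.swap i.castSucc i.succ) (rename (Equiv.swap i.succ j.succ)
          (rename (Equiv.swap i.castSucc i.succ) Q))
        = rename (Equiv.swap i.succ j.succ) (rename (Equiv.swap i.castSucc i.succ)
          (rename (Equiv.swap i.succ j.succ) Q)) := fun Q => by
      rw [rename_rename, rename_rename, rename_rename, rename_rename, hfun]
    have hinva : ∀ Q, rename (Equiv.swap i.castSucc i.succ) (D i Q) = D i Q :=
      demazure_inv i.castSucc i.succ hne_uv _ (hD i)
    have hinvb : ∀ Q, rename (Equiv.swap i.succ j.succ) (D j Q) = D j Q :=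
      demazure_inv i.succ j.succ hne_vw _ hDj
    exact braid_core (⇑(D i)) (⇑(D j)) (X i.succ - X i.castSucc) (X j.succ - X i.succ)
      (X j.succ - X i.castSucc)
      (regX hne_uv.symm) (regX hne_vw.symm) (regX hne_uw.symm)
      (by ring)
      (⇑(rename (Equiv.swap i.castSucc i.succ))) (⇑(rename (Equiv.swap i.succ j.succ)))
      (fun x y => map_mul _ x y) (fun x y => map_sub _ x y)
      (fun x y => map_mul _ x y) (fun x y => map_sub _ x y)
      hra_e hra_f hrb_d hrb_f hinva hinvb hbraid (hD i) hDj P
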